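/- Let p be a prime and n ≥ 1. The number of n-tuples ((r₁,a₁),...,(rₙ,aₙ)) with rᵢ ∈ ℕ, aᵢ ∈ ℤ/pℤ, aᵢ = 0 whenever rᵢ = 0, satisfying n = r₁ + 2r₂ + ⋯ + n·rₙ and a₁ + 2a₂ + ⋯ + n·aₙ = 0 in ℤ/pℤ, equals Σ_{k=1}^{n} [ν(n,k,p)·pᵏ + ν'(n,k,p)·p^{k-1}]. -/

import Mathlib

/-- Solutions of the rank equation with exactly `k` nonzero entries, all of whose
nonzero-coordinate indices (the values `i`, `1 ≤ i ≤ n`) are divisible by `p`. -/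
noncomputable def nuSolP (n k p : ℕ) : ℕ :=
  Nat.card {r : Fin n → ℕ //
    n = ∑ i : Fin n, (i.1 + 1) * r i ∧
      (Finset.univ.filter fun i : Fin n => r i ≠ 0).card = k ∧
        ∀ i : Fin n, r i ≠ 0 → p ∣ (i.1 + 1)}

/-- Solutions with exactly `k` nonzero entries, not all indices divisible by `p`. -/
noncomputable def nuSolP' (n k p : ℕ) : ℕ :=
  Nat.card {r : Fin n → ℕ //
    n = ∑ i : Fin n, (i.1 + 1) * r i ∧
      (Finset.univ.filter fun i : Fin n => r i ≠ 0).card = k ∧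
        ¬ ∀ i : Fin n, r i ≠ 0 → p ∣ (i.1 + 1)}




open Finset

lemma sum_split {ι M : Type*} [Fintype ι] [DecidableEq ι] [AddCommMonoid M]
    (f : ι → M) (i0 : ι) :
    ∑ i, f i = f i0 + ∑ i : {i // i ≠ i0}, f i.1 := by
  rw [← Finset.add_sum_erase _ f (Finset.mem_univ i0)]
  congr 1
  rw [Finset.sum_subtype (Finset.univ.erase i0) (p := fun i => i ≠ i0)
    (fun x => by simp) f]

lemma count_hyperplane {F : Type*} [Field F] [Fintype F]
    {ι : Type*} [Fintype ι] [DecidableEq ι] (c : ι → F) (i0 : ι) (h : c i0 ≠ 0) :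
    Nat.card {x : ι → F // ∑ i, c i * x i = 0} =
      Fintype.card F ^ (Fintype.card ι - 1) := by
  have e : {x : ι → F // ∑ i, c i * x i = 0} ≃ ({i // i ≠ i0} → F) :=
  { toFun := fun x j => x.1 j.1
    invFun := fun y =>
      ⟨fun i => if hi : i = i0 then -(c i0)⁻¹ * ∑ j : {j // j ≠ i0}, c j.1 * y j
        else y ⟨i, hi⟩, by
        rw [sum_split (fun i => c i * _) i0]
        have h1 : ∑ j : {j // j ≠ i0}, c j.1 * (if hj : (j : ι) = i0 then
            -(c i0)⁻¹ * ∑ j : {j // j ≠ i0}, c j.1 * y j else y ⟨j.1, hj⟩)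
            = ∑ j : {j // j ≠ i0}, c j.1 * y j :=
          Finset.sum_congr rfl (fun j _ => by rw [dif_neg j.2])
        rw [h1, dif_pos rfl]
        field_simp
        ring⟩
    left_inv := fun x => by
      ext i
      by_cases hi : i = i0
      · subst hi
        simp only [dif_pos rfl]
        have hx := x.2
        rw [sum_split (fun i => c i * x.1 i) i] at hx
        have : c i * x.1 i = -∑ j : {j // j ≠ i}, c j.1 * x.1 j.1 := by linear_combination hx
        rw [dif_pos trivial, neg_mul, ← mul_neg, ← this, ← mul_assoc, inv_mul_cancel₀ h, one_mul]
      · simp [dif_neg hi]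
    right_inv := fun y => by
      ext j
      simp [dif_neg j.2] }
  rw [Nat.card_congr e, Nat.card_eq_fintype_card, Fintype.card_fun]
  congr 1
  have : Fintype.card {i // i ≠ i0} = Fintype.card ι - 1 := by
    simp [Fintype.card_subtype_compl (p := fun i => i = i0), Fintype.card_subtype_eq]
  rw [this]

lemma sum_support {p n : ℕ} (r : Fin n → ℕ) (a : Fin n → ZMod p)
    (ha : ∀ i, r i = 0 → a i = 0) :
    ∑ i : Fin n, (i.1 + 1) • a i
      = ∑ j : {i : Fin n // r i ≠ 0}, ((j.1.1 + 1 : ℕ) : ZMod p) * a j.1 := by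
  rw [← Finset.sum_subtype (Finset.univ.filter fun i => r i ≠ 0)
    (fun x => by simp) (fun i => ((i.1 + 1 : ℕ) : ZMod p) * a i)]
  rw [Finset.sum_filter_of_ne (fun i _ hne => by
    intro hri
    exact hne (by rw [ha i hri, mul_zero]))]
  exact Finset.sum_congr rfl (fun i _ => by rw [nsmul_eq_mul])

noncomputable def fiberEquiv (p n : ℕ) (r : Fin n → ℕ) :
    {a : Fin n → ZMod p // (∀ i, r i = 0 → a i = 0) ∧ ∑ i : Fin n, (i.1 + 1) • a i = 0}
      ≃ {b : {i : Fin n // r i ≠ 0} → ZMod p //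
          ∑ j, ((j.1.1 + 1 : ℕ) : ZMod p) * b j = 0} where
  toFun a := ⟨fun j => a.1 j.1, by
    rw [← sum_support r a.1 a.2.1]; exact a.2.2⟩
  invFun b := ⟨fun i => if h : r i ≠ 0 then b.1 ⟨i, h⟩ else 0, by
    constructor
    · intro i hi
      simp [hi]
    · rw [sum_support r _ (fun i hi => by simp [hi])]
      have hc : ∀ j : {i : Fin n // r i ≠ 0}, ((j.1.1 + 1 : ℕ) : ZMod p) *
          (if h : r j.1 ≠ 0 then b.1 ⟨j.1, h⟩ else 0)
            = ((j.1.1 + 1 : ℕ) : ZMod p) * b.1 j := fun j => by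
        rw [dif_pos j.2]
      rw [Finset.sum_congr rfl fun j _ => hc j]
      exact b.2⟩
  left_inv a := by
    ext i
    by_cases h : r i ≠ 0
    · simp [dif_pos h]
    · push_neg at h
      simp [h, a.2.1 i h]
  right_inv b := by
    ext j
    simp [dif_pos j.2]

lemma fiber_card (p : ℕ) [Fact p.Prime] (n : ℕ) (r : Fin n → ℕ) :
    Nat.card {a : Fin n → ZMod p //
        (∀ i, r i = 0 → a i = 0) ∧ ∑ i : Fin n, (i.1 + 1) • a i = 0}
      = if ∀ i, r i ≠ 0 → p ∣ (i.1 + 1)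
        then p ^ (Finset.univ.filter fun i : Fin n => r i ≠ 0).card
        else p ^ ((Finset.univ.filter fun i : Fin n => r i ≠ 0).card - 1) := by
  rw [Nat.card_congr (fiberEquiv p n r)]
  have hk : Fintype.card {i : Fin n // r i ≠ 0}
      = (Finset.univ.filter fun i : Fin n => r i ≠ 0).card := Fintype.card_subtype _
  by_cases hdiv : ∀ i, r i ≠ 0 → p ∣ (i.1 + 1)
  · rw [if_pos hdiv]
    have htriv : ∀ b : {i : Fin n // r i ≠ 0} → ZMod p,
        ∑ j, ((j.1.1 + 1 : ℕ) : ZMod p) * b j = 0 := by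
      intro b
      refine Finset.sum_eq_zero fun j _ => ?_
      have : ((j.1.1 + 1 : ℕ) : ZMod p) = 0 :=
        (ZMod.natCast_eq_zero_iff _ _).2 (hdiv j.1 j.2)
      rw [this, zero_mul]
    rw [Nat.card_congr (Equiv.subtypeUnivEquiv htriv), Nat.card_eq_fintype_card,
      Fintype.card_fun, ZMod.card, hk]
  · rw [if_neg hdiv]
    push_neg at hdiv
    obtain ⟨i0, hri, hnd⟩ := hdiv
    have hc : ((i0.1 + 1 : ℕ) : ZMod p) ≠ 0 := fun hz =>
      hnd ((ZMod.natCast_eq_zero_iff _ _).1 hz)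
    rw [count_hyperplane _ ⟨i0, hri⟩ hc, ZMod.card, hk]

lemma rank_le' {n : ℕ} {r : Fin n → ℕ} (h : n = ∑ i : Fin n, (i.1 + 1) * r i)
    (i : Fin n) : r i ≤ n := by
  calc r i ≤ (i.1 + 1) * r i := Nat.le_mul_of_pos_left _ (Nat.succ_pos _)
    _ ≤ ∑ i : Fin n, (i.1 + 1) * r i :=
        Finset.single_le_sum (f := fun i : Fin n => (i.1 + 1) * r i)
          (fun _ _ => Nat.zero_le _) (Finset.mem_univ i)
    _ = n := h.symm

noncomputable instance fintypeR (n : ℕ) :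
    Fintype {r : Fin n → ℕ // n = ∑ i : Fin n, (i.1 + 1) * r i} := by
  have : Finite {r : Fin n → ℕ // n = ∑ i : Fin n, (i.1 + 1) * r i} := by
    refine Finite.of_injective
      (fun r => (fun i => (⟨r.1 i, Nat.lt_succ_of_le (rank_le' r.2 i)⟩ : Fin (n + 1)))) ?_
    intro r s hrs
    ext i
    exact congrArg Fin.val (congrFun hrs i)
  exact Fintype.ofFinite _

noncomputable def bigEquiv (p n : ℕ) :
    {z : Fin n → ℕ × ZMod p //
        n = ∑ i : Fin n, (i.1 + 1) * (z i).1 ∧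
          (∀ i : Fin n, (z i).1 = 0 → (z i).2 = 0) ∧
            ∑ i : Fin n, (i.1 + 1) • (z i).2 = 0}
      ≃ Σ r : {r : Fin n → ℕ // n = ∑ i : Fin n, (i.1 + 1) * r i},
          {a : Fin n → ZMod p //
            (∀ i, r.1 i = 0 → a i = 0) ∧ ∑ i : Fin n, (i.1 + 1) • a i = 0} where
  toFun z := ⟨⟨fun i => (z.1 i).1, z.2.1⟩, ⟨fun i => (z.1 i).2, z.2.2.1, z.2.2.2⟩⟩
  invFun x := ⟨fun i => (x.1.1 i, x.2.1 i), x.1.2, x.2.2.1, x.2.2.2⟩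
  left_inv z := rfl
  right_inv x := rfl

/-- Count of tuples `((rᵢ,aᵢ))ᵢ` satisfying the rank equation and the determinant
equation `∑ i·aᵢ = 0` in `ℤ/pℤ`. -/
theorem stmt_11 (p : ℕ) (hp : p.Prime) (n : ℕ) (hn : 1 ≤ n) :
    Nat.card {z : Fin n → ℕ × ZMod p //
        n = ∑ i : Fin n, (i.1 + 1) * (z i).1 ∧
          (∀ i : Fin n, (z i).1 = 0 → (z i).2 = 0) ∧
            ∑ i : Fin n, (i.1 + 1) • (z i).2 = 0} =
      ∑ k ∈ Finset.Icc 1 n, (nuSolP n k p * p ^ k + nuSolP' n k p * p ^ (k - 1)) := by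
  haveI : Fact p.Prime := ⟨hp⟩
  classical
  set kf : (Fin n → ℕ) → ℕ :=
    fun r => (Finset.univ.filter fun i : Fin n => r i ≠ 0).card with hkf
  set dv : (Fin n → ℕ) → Prop :=
    fun r => ∀ i : Fin n, r i ≠ 0 → p ∣ (i.1 + 1) with hdv
  rw [Nat.card_congr (bigEquiv p n), Nat.card_eq_fintype_card, Fintype.card_sigma]
  have hfib : ∀ r : {r : Fin n → ℕ // n = ∑ i : Fin n, (i.1 + 1) * r i},
      Fintype.card {a : Fin n → ZMod p //
          (∀ i, r.1 i = 0 → a i = 0) ∧ ∑ i : Fin n, (i.1 + 1) • a i = 0}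
        = if dv r.1 then p ^ kf r.1 else p ^ (kf r.1 - 1) := fun r => by
    rw [← Nat.card_eq_fintype_card, fiber_card]
  rw [Finset.sum_congr rfl fun r _ => hfib r]
  -- bounds on kf
  have hk1 : ∀ r : {r : Fin n → ℕ // n = ∑ i : Fin n, (i.1 + 1) * r i},
      kf r.1 ∈ Finset.Icc 1 n := by
    intro r
    rw [Finset.mem_Icc]
    constructor
    · by_contra hlt
      push_neg at hlt
      interval_cases h : kf r.1
      · have hall : ∀ i : Fin n, r.1 i = 0 := by
          intro i
          by_contra hne
          have hmem : i ∈ Finset.univ.filter fun i : Fin n => r.1 i ≠ 0 :=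
            Finset.mem_filter.2 ⟨Finset.mem_univ _, hne⟩
          simp only [hkf] at h
          rw [Finset.card_eq_zero] at h
          rw [h] at hmem
          exact absurd hmem (Finset.notMem_empty i)
        have h2 := r.2
        rw [Finset.sum_congr rfl (fun i _ => by rw [hall i, mul_zero])] at h2
        simp at h2
        omega
    · calc kf r.1 ≤ Finset.univ.card := Finset.card_filter_le _ _
        _ = n := by simp
  -- nuSolP as a filter card
  have hnu : ∀ k, nuSolP n k p =
      (Finset.univ.filter fun r : {r : Fin n → ℕ // n = ∑ i : Fin n, (i.1 + 1) * r i} =>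
        kf r.1 = k ∧ dv r.1).card := by
    intro k
    rw [nuSolP, ← Fintype.card_subtype, ← Nat.card_eq_fintype_card]
    exact Nat.card_congr (Equiv.subtypeSubtypeEquivSubtypeInter
      (fun r : Fin n → ℕ => n = ∑ i : Fin n, (i.1 + 1) * r i)
      (fun r => kf r = k ∧ dv r)).symm
  have hnu' : ∀ k, nuSolP' n k p =
      (Finset.univ.filter fun r : {r : Fin n → ℕ // n = ∑ i : Fin n, (i.1 + 1) * r i} =>
        kf r.1 = k ∧ ¬ dv r.1).card := by
    intro k
    rw [nuSolP', ← Fintype.card_subtype, ← Nat.card_eq_fintype_card]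
    exact Nat.card_congr (Equiv.subtypeSubtypeEquivSubtypeInter
      (fun r : Fin n → ℕ => n = ∑ i : Fin n, (i.1 + 1) * r i)
      (fun r => kf r = k ∧ ¬ dv r)).symm
  calc ∑ r : {r : Fin n → ℕ // n = ∑ i : Fin n, (i.1 + 1) * r i},
        (if dv r.1 then p ^ kf r.1 else p ^ (kf r.1 - 1))
      = ∑ r : {r : Fin n → ℕ // n = ∑ i : Fin n, (i.1 + 1) * r i},
          ∑ k ∈ Finset.Icc 1 n,
            ((if kf r.1 = k ∧ dv r.1 then p ^ k else 0) +
             (if kf r.1 = k ∧ ¬ dv r.1 then p ^ (k - 1) else 0)) := by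
        refine Finset.sum_congr rfl fun r _ => ?_
        rw [Finset.sum_add_distrib]
        rw [Finset.sum_eq_single (kf r.1)
          (fun b _ hb => if_neg (fun hc => hb (hc.1.symm)))
          (fun hne => absurd (hk1 r) hne)]
        rw [Finset.sum_eq_single (kf r.1)
          (fun b _ hb => if_neg (fun hc => hb (hc.1.symm)))
          (fun hne => absurd (hk1 r) hne)]
        by_cases hd : dv r.1
        · rw [if_pos hd, if_pos (⟨rfl, hd⟩ : kf r.1 = kf r.1 ∧ dv r.1),
            if_neg (fun hc => hc.2 hd)]
          omega
        · rw [if_neg hd, if_neg (fun hc : kf r.1 = kf r.1 ∧ dv r.1 => hd hc.2),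
            if_pos (⟨rfl, hd⟩ : kf r.1 = kf r.1 ∧ ¬ dv r.1)]
          omega
    _ = ∑ k ∈ Finset.Icc 1 n,
          ∑ r : {r : Fin n → ℕ // n = ∑ i : Fin n, (i.1 + 1) * r i},
            ((if kf r.1 = k ∧ dv r.1 then p ^ k else 0) +
             (if kf r.1 = k ∧ ¬ dv r.1 then p ^ (k - 1) else 0)) := Finset.sum_comm
    _ = ∑ k ∈ Finset.Icc 1 n, (nuSolP n k p * p ^ k + nuSolP' n k p * p ^ (k - 1)) := by
        refine Finset.sum_congr rfl fun k _ => ?_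
        rw [Finset.sum_add_distrib, hnu, hnu']
        congr 1
        · rw [← Finset.sum_filter, Finset.sum_const, smul_eq_mul]
        · rw [← Finset.sum_filter, Finset.sum_const, smul_eq_mul]
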